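/- For every function g : ℕ → ℕ and every g-regressive coloring c : [ℕ]² → ℕ, there is an infinite set B ⊆ ℕ such that the restriction of c to [B]² is min-homogeneous. -/

import Mathlib

theorem stmt3 (g : ℕ → ℕ) (c : ℕ → ℕ → ℕ)
    (hc : ∀ m n, m < n → c m n ≤ g m) :
    ∃ B : Set ℕ, B.Infinite ∧
      ∀ m n n', m ∈ B → n ∈ B → n' ∈ B → m < n → m < n' → c m n = c m n' := by
  classical
  have step : ∀ S : Set ℕ, S.Infinite → ∀ m : ℕ,
      ∃ v, {n ∈ S | m < n ∧ c m n = v}.Infinite := by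
    intro S hS m
    by_contra h
    push_neg at h
    have h1 : {n ∈ S | m < n}.Infinite := by
      have hsub : S \ {n | n ≤ m} ⊆ {n ∈ S | m < n} := by
        intro n hn
        exact ⟨hn.1, not_le.mp hn.2⟩
      exact ((hS.diff (Set.finite_le_nat m)).mono hsub)
    have h2 : {n ∈ S | m < n} ⊆
        ⋃ v ∈ Finset.range (g m + 1), {n ∈ S | m < n ∧ c m n = v} := by
      intro n hn
      refine Set.mem_biUnion ?_ ⟨hn.1, hn.2, rfl⟩
      exact Finset.mem_range.mpr (Nat.lt_succ_of_le (hc m n hn.2))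
    have h3 : (⋃ v ∈ Finset.range (g m + 1), {n ∈ S | m < n ∧ c m n = v}).Finite :=
      Set.Finite.biUnion (Finset.range _).finite_toSet
        (fun v _ => (h v))
    exact h1 (h3.subset h2)
  let F : ℕ → {S : Set ℕ // S.Infinite} := fun k =>
    Nat.rec ⟨Set.univ, Set.infinite_univ⟩
      (fun _ p =>
        ⟨{n ∈ p.1 | sInf p.1 < n ∧ c (sInf p.1) n =
            Classical.choose (step p.1 p.2 (sInf p.1))},
          Classical.choose_spec (step p.1 p.2 (sInf p.1))⟩) k
  set a : ℕ → ℕ := fun k => sInf (F k).1 with ha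
  have hFsucc : ∀ k, (F (k + 1)).1 =
      {n ∈ (F k).1 | a k < n ∧ c (a k) n =
        Classical.choose (step (F k).1 (F k).2 (a k))} := fun k => rfl
  have haMem : ∀ k, a k ∈ (F k).1 := fun k => Nat.sInf_mem (F k).2.nonempty
  have hchain : ∀ k j, k < j → (F j).1 ⊆ (F (k + 1)).1 := by
    intro k j hkj
    induction j with
    | zero => omega
    | succ j ih =>
      rcases Nat.lt_succ_iff_lt_or_eq.mp hkj with h | h
      · intro n hn
        rw [hFsucc j] at hn
        exact ih h hn.1
      · rw [h]
  have hstep : ∀ k n, n ∈ (F (k + 1)).1 →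
      a k < n ∧ c (a k) n = Classical.choose (step (F k).1 (F k).2 (a k)) := by
    intro k n hn
    rw [hFsucc k] at hn
    exact hn.2
  have hmono : StrictMono a :=
    strictMono_nat_of_lt_succ fun k => (hstep k _ (haMem (k + 1))).1
  refine ⟨Set.range a, Set.infinite_range_of_injective hmono.injective, ?_⟩
  rintro m n n' ⟨i, rfl⟩ ⟨j, rfl⟩ ⟨j', rfl⟩ h1 h2
  have hij : i < j := hmono.lt_iff_lt.mp h1
  have hij' : i < j' := hmono.lt_iff_lt.mp h2
  have e1 := (hstep i _ (hchain i j hij (haMem j))).2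
  have e2 := (hstep i _ (hchain i j' hij' (haMem j'))).2
  rw [e1, e2]
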